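/- Let C be a pure normal simplicial complex of dimension d−1, let S be a nonempty set of vertices of C, and let F0 be an ordered facet of C such that F0 ∩ S = ∅ and the ordering of F0 is admissible with respect to S. Then there exists an ordered facet F1, adjacent to F0 in the dual graph of C, such that the one-step dual path [F0, F1] is monotone and conservative towards S. -/

import Mathlib

/-! Common definitions: pure simplicial complexes (represented by their facet sets),
vertex-distance, links, ordered facets, vectors of distances, admissibility, and
monotone/conservative dual paths, following Adiprasito–Benedetti's combinatorial
segments. -/

open scoped Classical

noncomputable section

namespace MCP

variable {V : Type} [DecidableEq V] [Fintype V]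

/-- The vertex set of the complex whose set of facets is `C`. -/
def verts (C : Finset (Finset V)) : Finset V := C.sup id

/-- `f` is a face of the pure complex with facet set `C`. -/
def IsFace (C : Finset (Finset V)) (f : Finset V) : Prop := ∃ F ∈ C, f ⊆ F

/-- `C` is pure of dimension `d - 1`: every facet has `d` vertices. -/
def Pure (C : Finset (Finset V)) (d : ℕ) : Prop := ∀ F ∈ C, F.card = d

/-- The 1-skeleton of the complex: two vertices are joined iff they lie in a common facet. -/
def skeleton (C : Finset (Finset V)) : SimpleGraph V where
  Adj u v := u ≠ v ∧ ∃ F ∈ C, u ∈ F ∧ v ∈ F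
  symm := by
    constructor
    rintro u v ⟨h, F, hF, hu, hv⟩
    exact ⟨h.symm, F, hF, hv, hu⟩
  loopless := by constructor; rintro u ⟨h, -⟩; exact h rfl

/-- Two facets are adjacent in the dual graph iff they differ in a single vertex. -/
def AdjFacets (F G : Finset V) : Prop :=
  F ≠ G ∧ F.card = G.card ∧ (F ∩ G).card + 1 = F.card

/-- A dual path: a list of facets of `C` in which consecutive facets are adjacent. -/
def IsDualPath (C : Finset (Finset V)) (P : List (Finset V)) : Prop :=
  (∀ F ∈ P, F ∈ C) ∧ P.Chain' AdjFacets

/-- `C` is normal: for every face `f`, any two facets containing `f` are joined by a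
dual path all of whose facets contain `f`. -/
def Normal (C : Finset (Finset V)) : Prop :=
  ∀ f : Finset V, ∀ F ∈ C, ∀ G ∈ C, f ⊆ F → f ⊆ G →
    ∃ P : List (Finset V), P.head? = some F ∧ P.getLast? = some G ∧
      (∀ H ∈ P, H ∈ C ∧ f ⊆ H) ∧ P.Chain' AdjFacets

/-- The (facet set of the) link of a vertex `x` in `C`. -/
def link (C : Finset (Finset V)) (x : V) : Finset (Finset V) :=
  (C.filter (fun F => x ∈ F)).image (fun F => F.erase x)

/-- Vertex-distance (in the 1-skeleton) between two sets of vertices, with value `⊤`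
if one of the sets is empty, and with the special `0/1` convention when the complex
is `0`-dimensional. -/
def vdistSets (C : Finset (Finset V)) (S T : Finset V) : ℕ∞ :=
  if C.sup Finset.card ≤ 1 then
    (if S.Nonempty ∧ T.Nonempty then (if (S ∩ T).Nonempty then 0 else 1) else ⊤)
  else ⨅ u ∈ S, ⨅ v ∈ T, (skeleton C).edist u v

/-- The derived target set `S'` in the link of `x`, used in the recursive definitions
of the vector of distances and of admissibility. -/
def targetSet (C : Finset (Finset V)) (x : V) (S : Finset V) : Finset V :=
  if x ∈ S then S ∩ verts (link C x)
  else (verts (link C x)).filter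
    (fun w => vdistSets C {w} S + 1 = vdistSets C {x} S)

/-- The vector of distances from an ordered facet (a list of vertices) to a target set. -/
def distVector : Finset (Finset V) → List V → Finset V → List ℕ∞
  | _, [], _ => []
  | C, x :: rest, S => vdistSets C {x} S :: distVector (link C x) rest (targetSet C x S)

/-- Admissibility of an ordering of a facet with respect to a target set: the first
vertex realizes the vertex-distance from the facet to the target set, and recursively
in the link. -/
def Admissible : Finset (Finset V) → List V → Finset V → Prop
  | _, [], _ => True
  | C, x :: rest, S =>
      vdistSets C {x} S = vdistSets C (x :: rest).toFinset S ∧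
      Admissible (link C x) rest (targetSet C x S)

/-- An ordered facet of `C`: a repetition-free list of vertices forming a facet. -/
def IsOrderedFacet (C : Finset (Finset V)) (L : List V) : Prop :=
  L.Nodup ∧ L.toFinset ∈ C

/-- A dual path of ordered facets. -/
def IsOrderedDualPath (C : Finset (Finset V)) (Γ : List (List V)) : Prop :=
  (∀ L ∈ Γ, IsOrderedFacet C L) ∧
  Γ.Chain' (fun L M => AdjFacets L.toFinset M.toFinset)

/-- A path of ordered facets is monotone towards `S` if its vectors of distances are
strictly lexicographically decreasing. -/
def MonotonePath (C : Finset (Finset V)) (S : Finset V) (Γ : List (List V)) : Prop :=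
  Γ.Chain' (fun L M => List.Lex (· < ·) (distVector C M S) (distVector C L S))

/-- The index of a step: the least position at which the two orderings differ. -/
def stepIndex (L M : List V) : ℕ := sInf {k : ℕ | L[k]? ≠ M[k]?}

/-- The step from `L` to `M` is conservative towards `S`: the removed vertex is the last
vertex of `L`, and `M` is admissibly ordered with maximum index among all admissible
reorderings. -/
def ConservativeStep (C : Finset (Finset V)) (S : Finset V) (L M : List V) : Prop :=
  (∃ x, L.getLast? = some x ∧ L.toFinset \ M.toFinset = {x}) ∧
  Admissible C M S ∧
  ∀ M' : List V, M'.Perm M → Admissible C M' S → stepIndex L M' ≤ stepIndex L M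

/-- A path of ordered facets is conservative towards `S` if its first facet is
admissibly ordered and every step is conservative. -/
def ConservativePath (C : Finset (Finset V)) (S : Finset V) (Γ : List (List V)) : Prop :=
  (∀ L ∈ Γ.head?, Admissible C L S) ∧ Γ.Chain' (ConservativeStep C S)

/-- A monotone conservative dual path of ordered facets towards `S`. -/
def MonoConsPath (C : Finset (Finset V)) (S : Finset V) (Γ : List (List V)) : Prop :=
  IsOrderedDualPath C Γ ∧ MonotonePath C S Γ ∧ ConservativePath C S Γ

/-- The path `Γ` starts at the facet `F`. -/
def StartsAt (Γ : List (List V)) (F : Finset V) : Prop :=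
  ∃ L, Γ.head? = some L ∧ L.toFinset = F

/-- The path `Γ` ends at the facet `F`. -/
def EndsAt (Γ : List (List V)) (F : Finset V) : Prop :=
  ∃ L, Γ.getLast? = some L ∧ L.toFinset = F

/-- `C` is flag: every set of vertices of `C` pairwise joined by edges of `C` is a face. -/
def Flag (C : Finset (Finset V)) : Prop :=
  ∀ T : Finset V, T ⊆ verts C →
    (∀ u ∈ T, ∀ v ∈ T, u ≠ v → (skeleton C).Adj u v) → IsFace C T

/-- A critical clique: a clique of the 1-skeleton that becomes a face after removing a
suitable vertex. -/
def CriticalClique (C : Finset (Finset V)) (T : Finset V) : Prop :=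
  (∀ u ∈ T, ∀ v ∈ T, u ≠ v → (skeleton C).Adj u v) ∧ ∃ v ∈ T, IsFace C (T.erase v)

/-- `C` is `k`-banner: every critical clique with at least `k + 1` vertices is a face. -/
def Banner (C : Finset (Finset V)) (k : ℕ) : Prop :=
  ∀ T : Finset V, CriticalClique C T → k + 1 ≤ T.card → IsFace C T

/-- A pure `(d-1)`-complex is a pseudomanifold (possibly with boundary) if every
`(d-2)`-dimensional face lies in at most two facets. -/
def Pseudomanifold (C : Finset (Finset V)) (d : ℕ) : Prop :=
  ∀ f : Finset V, f.card + 1 = d → IsFace C f → (C.filter (fun F => f ⊆ F)).card ≤ 2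

/-- A pure `(d-1)`-complex is a pseudomanifold without boundary if every
`(d-2)`-dimensional face lies in exactly two facets. -/
def PseudomanifoldNoBoundary (C : Finset (Finset V)) (d : ℕ) : Prop :=
  ∀ f : Finset V, f.card + 1 = d → IsFace C f → (C.filter (fun F => f ⊆ F)).card = 2

/-- The join of two complexes (given by their facet sets, on disjoint vertex sets). -/
def join (C₁ C₂ : Finset (Finset V)) : Finset (Finset V) :=
  (C₁ ×ˢ C₂).image (fun p => p.1 ∪ p.2)

/-- The one-point-suspension of `C` at the vertex `v`; the two new suspension vertices
are `Sum.inr false` and `Sum.inr true`. -/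
def ops (C : Finset (Finset V)) (v : V) : Finset (Finset (V ⊕ Bool)) :=
  ((C.filter (fun F => v ∈ F)).image
      (fun F => ((F.erase v).image Sum.inl) ∪ {Sum.inr false, Sum.inr true}))
  ∪ ((C.filter (fun F => v ∉ F)).image (fun F => (F.image Sum.inl) ∪ {Sum.inr false}))
  ∪ ((C.filter (fun F => v ∉ F)).image (fun F => (F.image Sum.inl) ∪ {Sum.inr true}))

/-- The degree of a vertex in the 1-skeleton of `C`. -/
def degree (C : Finset (Finset V)) (x : V) : ℕ :=
  (Finset.univ.filter fun w => (skeleton C).Adj x w).card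

/-- Vertex-decomposability of a pure complex given by its facet set: either a single
simplex, or there is a vertex whose deletion stays pure of the same dimension and whose
link and deletion are both vertex-decomposable.  (The condition
`∀ F ∈ C, ∃ G ∈ C, x ∉ G ∧ F.erase x ⊆ G` expresses that the deletion of `x` is pure
of the same dimension, so that its facets are the facets of `C` avoiding `x`.) -/
inductive VertexDecomposable : Finset (Finset V) → Prop
  | simplex (F : Finset V) : VertexDecomposable {F}
  | step (C : Finset (Finset V)) (x : V) (hx : x ∈ verts C)
      (hdelpure : ∀ F ∈ C, ∃ G ∈ C, x ∉ G ∧ F.erase x ⊆ G)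
      (hlink : VertexDecomposable (link C x))
      (hdel : VertexDecomposable (C.filter (fun F => x ∉ F))) :
      VertexDecomposable C

/-- The maximum length (number of steps) of a monotone conservative path in `C`, over
all nonempty target sets of vertices of `C`. -/
def maxl (C : Finset (Finset V)) : ℕ :=
  sSup {n : ℕ | ∃ (S : Finset V) (Γ : List (List V)), S.Nonempty ∧ S ⊆ verts C ∧
    MonoConsPath C S Γ ∧ Γ.length = n + 1}

/-- `CombSeg C Γ S x₀`: the dual path `Γ` is a combinatorial segment in `C` from its
first facet to the target set `S`, anchored at `x₀` (Adiprasito–Benedetti). -/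
inductive CombSeg : Finset (Finset V) → List (Finset V) → Finset V → V → Prop
  | intersects (C : Finset (Finset V)) (F S : Finset V) (x₀ : V)
      (hF : F ∈ C) (hx : x₀ ∈ F) (hFS : (F ∩ S).Nonempty) :
      CombSeg C [F] S x₀
  | dimOne (C : Finset (Finset V)) (S : Finset V) (x₀ v : V)
      (hdim : ∀ F ∈ C, F.card = 1)
      (h₁ : {x₀} ∈ C) (h₂ : {v} ∈ C) (hx : x₀ ∉ S) (hv : v ∈ S) :
      CombSeg C [{x₀}, {v}] S x₀
  | step (C : Finset (Finset V)) (F₀ : Finset V) (Γ₁ Γ₂ : List (Finset V))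
      (Fk S : Finset V) (x₀ y x₀' : V) (ℓ : ℕ∞)
      (hdim : ∀ F ∈ C, 2 ≤ F.card)
      (hmem : ∀ F ∈ F₀ :: Γ₁, F ∈ C)
      (hdisj : ∀ F ∈ F₀ :: Γ₁, F ∩ S = ∅)
      (hℓ : vdistSets C F₀ S = ℓ)
      (hbefore : ∀ F ∈ F₀ :: Γ₁, ¬ vdistSets C F S < ℓ)
      (hafter : vdistSets C Fk S < ℓ)
      (hy : y ∈ Fk)
      (hyd : vdistSets C {y} S + 1 = ℓ)
      (hyuniq : ∀ z ∈ Fk, vdistSets C {z} S + 1 = ℓ → z = y)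
      (hx₀ : ∀ F ∈ F₀ :: Γ₁, x₀ ∈ F) (hx₀k : x₀ ∈ Fk)
      (hlink : CombSeg (link C x₀)
          (((F₀ :: Γ₁) ++ [Fk]).map (fun F => F.erase x₀))
          ((verts (link C x₀)).filter (fun w => vdistSets C {w} S + 1 = ℓ)) x₀')
      (htail : CombSeg C (Fk :: Γ₂) S y) :
      CombSeg C (F₀ :: Γ₁ ++ Fk :: Γ₂) S x₀

end MCP

namespace MCP

variable {V : Type} [DecidableEq V] [Fintype V]

omit [Fintype V] in
lemma vdist_eq_iInf (C : Finset (Finset V)) (S T : Finset V)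
    (h : ¬ C.sup Finset.card ≤ 1) :
    vdistSets C S T = ⨅ u ∈ S, ⨅ v ∈ T, (skeleton C).edist u v := by
  rw [vdistSets, if_neg h]

omit [Fintype V] in
lemma vdist_singleton (C : Finset (Finset V)) (x : V) (T : Finset V)
    (h : ¬ C.sup Finset.card ≤ 1) :
    vdistSets C {x} T = ⨅ v ∈ T, (skeleton C).edist x v := by
  rw [vdist_eq_iInf C _ T h]
  simp

omit [Fintype V] in
lemma vdist_le_edist (C : Finset (Finset V)) (x : V) (T : Finset V)
    (h : ¬ C.sup Finset.card ≤ 1) {v : V} (hv : v ∈ T) :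
    vdistSets C {x} T ≤ (skeleton C).edist x v := by
  rw [vdist_singleton C x T h]
  exact biInf_le _ hv

omit [Fintype V] in
lemma vdist_conv (C : Finset (Finset V)) (S T : Finset V)
    (h : C.sup Finset.card ≤ 1) :
    vdistSets C S T =
      if S.Nonempty ∧ T.Nonempty then (if (S ∩ T).Nonempty then 0 else 1) else ⊤ := by
  rw [vdistSets, if_pos h]

omit [Fintype V] in
/-- Monotonicity: the distance from a subset element is at least the set distance. -/
lemma vdist_le_of_mem (C : Finset (Finset V)) {F : Finset V} {u : V} (hu : u ∈ F)
    (S : Finset V) : vdistSets C F S ≤ vdistSets C {u} S := by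
  by_cases h : C.sup Finset.card ≤ 1
  · rw [vdist_conv _ _ _ h, vdist_conv _ _ _ h]
    by_cases hS : S.Nonempty
    · have hFne : F.Nonempty := ⟨u, hu⟩
      have hune : ({u} : Finset V).Nonempty := Finset.singleton_nonempty u
      have h1 : F.Nonempty ∧ S.Nonempty := ⟨hFne, hS⟩
      have h2 : ({u} : Finset V).Nonempty ∧ S.Nonempty := ⟨hune, hS⟩
      rw [if_pos h1, if_pos h2]
      by_cases hi : ({u} ∩ S : Finset V).Nonempty
      · obtain ⟨w, hw⟩ := hi
        rw [Finset.mem_inter, Finset.mem_singleton] at hw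
        have h3 : (F ∩ S).Nonempty := ⟨w, Finset.mem_inter.2 ⟨hw.1 ▸ hu, hw.2⟩⟩
        rw [if_pos h3, if_pos ⟨w, Finset.mem_inter.2 ⟨Finset.mem_singleton.2 hw.1, hw.2⟩⟩]
      · rw [if_neg hi]
        split_ifs <;> simp
    · rw [if_neg (by simp [hS]), if_neg (by simp [hS])]
  · rw [vdist_eq_iInf _ _ _ h, vdist_singleton _ _ _ h]
    exact iInf₂_le_of_le u hu le_rfl

omit [Fintype V] in
/-- The set distance is attained at some element. -/
lemma vdist_attained (C : Finset (Finset V)) {F : Finset V} (hF : F.Nonempty)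
    (S : Finset V) : ∃ u ∈ F, vdistSets C F S = vdistSets C {u} S := by
  by_cases h : C.sup Finset.card ≤ 1
  · by_cases hS : S.Nonempty
    · by_cases hi : (F ∩ S).Nonempty
      · obtain ⟨u, hu⟩ := hi
        rw [Finset.mem_inter] at hu
        refine ⟨u, hu.1, ?_⟩
        have h1 : F.Nonempty ∧ S.Nonempty := ⟨⟨u, hu.1⟩, hS⟩
        have h2 : ({u} : Finset V).Nonempty ∧ S.Nonempty := ⟨Finset.singleton_nonempty u, hS⟩
        have h3 : (F ∩ S).Nonempty := ⟨u, Finset.mem_inter.2 hu⟩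
        have h4 : ({u} ∩ S : Finset V).Nonempty :=
          ⟨u, Finset.mem_inter.2 ⟨Finset.mem_singleton_self u, hu.2⟩⟩
        rw [vdist_conv _ _ _ h, vdist_conv _ _ _ h, if_pos h1, if_pos h2, if_pos h3, if_pos h4]
      · obtain ⟨u, hu⟩ := hF
        refine ⟨u, hu, ?_⟩
        have h1 : F.Nonempty ∧ S.Nonempty := ⟨⟨u, hu⟩, hS⟩
        have h2 : ({u} : Finset V).Nonempty ∧ S.Nonempty := ⟨Finset.singleton_nonempty u, hS⟩
        have h4 : ¬ ({u} ∩ S : Finset V).Nonempty := by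
          rintro ⟨w, hw⟩
          rw [Finset.mem_inter, Finset.mem_singleton] at hw
          exact hi ⟨w, Finset.mem_inter.2 ⟨hw.1 ▸ hu, hw.2⟩⟩
        rw [vdist_conv _ _ _ h, vdist_conv _ _ _ h, if_pos h1, if_pos h2, if_neg hi, if_neg h4]
    · obtain ⟨u, hu⟩ := hF
      refine ⟨u, hu, ?_⟩
      rw [vdist_conv _ _ _ h, vdist_conv _ _ _ h,
        if_neg (by simp [hS]), if_neg (by simp [hS])]
  · have hrw : ∀ G : Finset V, vdistSets C G S
        = G.inf (fun u => ⨅ v ∈ S, (skeleton C).edist u v) := by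
      intro G; rw [vdist_eq_iInf _ _ _ h, Finset.inf_eq_iInf]
    obtain ⟨u, hu, heq⟩ := Finset.exists_mem_eq_inf F hF
      (fun u => ⨅ v ∈ S, (skeleton C).edist u v)
    refine ⟨u, hu, ?_⟩
    rw [hrw, vdist_singleton _ _ _ h, heq]

omit [Fintype V] in
/-- If `x ∉ S` then the distance from `x` to `S` is at least 1. -/
lemma one_le_vdist (C : Finset (Finset V)) {x : V} {S : Finset V} (hx : x ∉ S) :
    1 ≤ vdistSets C {x} S := by
  by_cases h : C.sup Finset.card ≤ 1
  · rw [vdist_conv _ _ _ h]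
    split_ifs with h1 h2
    · obtain ⟨w, hw⟩ := h2
      rw [Finset.mem_inter, Finset.mem_singleton] at hw
      exact absurd (hw.1 ▸ hw.2) hx
    · exact le_refl 1
    · exact le_top
  · rw [vdist_singleton _ _ _ h]
    refine le_iInf₂ fun v hv => ?_
    have hne : x ≠ v := fun e => hx (e ▸ hv)
    exact Order.one_le_iff_pos.mpr ((skeleton C).edist_pos_of_ne hne)

end MCP
namespace MCP

variable {V : Type} [DecidableEq V] [Fintype V]

lemma chain'_map_of_mem {α β : Type*} {R : α → α → Prop} {R' : β → β → Prop}
    {p : α → Prop} {f : α → β} :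
    ∀ {l : List α}, l.Chain' R → (∀ a ∈ l, p a) →
    (∀ a b, p a → p b → R a b → R' (f a) (f b)) → (l.map f).Chain' R'
  | [], _, _, _ => List.isChain_nil
  | [_], _, _, _ => List.isChain_singleton _
  | a :: b :: l, h, hmem, himp => by
    simp only [List.Chain', List.isChain_cons_cons] at h
    simp only [List.Chain', List.map_cons, List.isChain_cons_cons]
    refine ⟨himp a b (hmem a (by simp)) (hmem b (by simp)) h.1, ?_⟩
    have := chain'_map_of_mem (l := b :: l) h.2
      (fun c hc => hmem c (List.mem_cons_of_mem a hc)) himp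
    simpa [List.Chain'] using this

omit [Fintype V] in
lemma mem_link_iff {C : Finset (Finset V)} {x : V} {f : Finset V} :
    f ∈ link C x ↔ ∃ F ∈ C, x ∈ F ∧ f = F.erase x := by
  simp only [link, Finset.mem_image, Finset.mem_filter]
  constructor
  · rintro ⟨F, ⟨hF, hx⟩, rfl⟩; exact ⟨F, hF, hx, rfl⟩
  · rintro ⟨F, hF, hx, rfl⟩; exact ⟨F, ⟨hF, hx⟩, rfl⟩

omit [Fintype V] in
lemma insert_mem_of_mem_link {C : Finset (Finset V)} {x : V} {f : Finset V}
    (h : f ∈ link C x) : insert x f ∈ C ∧ x ∉ f := by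
  obtain ⟨F, hF, hx, rfl⟩ := mem_link_iff.1 h
  rw [Finset.insert_erase hx]
  exact ⟨hF, Finset.notMem_erase x F⟩

omit [Fintype V] in
lemma erase_mem_link {C : Finset (Finset V)} {x : V} {F : Finset V}
    (hF : F ∈ C) (hx : x ∈ F) : F.erase x ∈ link C x :=
  mem_link_iff.2 ⟨F, hF, hx, rfl⟩

omit [Fintype V] in
lemma pure_link {C : Finset (Finset V)} {d : ℕ} (h : Pure C (d + 1)) (x : V) :
    Pure (link C x) d := by
  intro f hf
  obtain ⟨F, hF, hx, rfl⟩ := mem_link_iff.1 hf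
  rw [Finset.card_erase_of_mem hx, h F hF]
  omega

omit [Fintype V] in
lemma mem_verts_of_mem_facet {C : Finset (Finset V)} {F : Finset V} {u : V}
    (hF : F ∈ C) (hu : u ∈ F) : u ∈ verts C :=
  Finset.mem_sup.2 ⟨F, hF, hu⟩

omit [Fintype V] in
lemma verts_link_subset {C : Finset (Finset V)} {x : V} :
    verts (link C x) ⊆ verts C := by
  intro u hu
  obtain ⟨f, hf, hu⟩ := Finset.mem_sup.1 hu
  obtain ⟨F, hF, hx, rfl⟩ := mem_link_iff.1 hf
  exact mem_verts_of_mem_facet hF (Finset.mem_of_mem_erase hu)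

omit [Fintype V] in
lemma ne_of_mem_verts_link {C : Finset (Finset V)} {x u : V}
    (hu : u ∈ verts (link C x)) : u ≠ x := by
  obtain ⟨f, hf, hu⟩ := Finset.mem_sup.1 hu
  obtain ⟨F, hF, hx, rfl⟩ := mem_link_iff.1 hf
  exact Finset.ne_of_mem_erase hu

omit [Fintype V] in
lemma adjFacets_erase {A B : Finset V} {x : V} (hxA : x ∈ A) (hxB : x ∈ B)
    (h : AdjFacets A B) : AdjFacets (A.erase x) (B.erase x) := by
  obtain ⟨hne, hcard, hint⟩ := h
  refine ⟨?_, ?_, ?_⟩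
  · intro he
    exact hne (by rw [← Finset.insert_erase hxA, ← Finset.insert_erase hxB, he])
  · rw [Finset.card_erase_of_mem hxA, Finset.card_erase_of_mem hxB, hcard]
  · rw [Finset.erase_inter, Finset.inter_erase, Finset.erase_idem,
      Finset.card_erase_of_mem (Finset.mem_inter.2 ⟨hxA, hxB⟩),
      Finset.card_erase_of_mem hxA]
    have hpos : 1 ≤ (A ∩ B).card :=
      Finset.card_pos.2 ⟨x, Finset.mem_inter.2 ⟨hxA, hxB⟩⟩
    omega

omit [Fintype V] in
/-- The link of a vertex in a normal complex is normal. -/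
lemma normal_link {C : Finset (Finset V)} (h : Normal C) (x : V) :
    Normal (link C x) := by
  intro f F hF G hG hfF hfG
  obtain ⟨F', hF', hxF', rfl⟩ := mem_link_iff.1 hF
  obtain ⟨G', hG', hxG', rfl⟩ := mem_link_iff.1 hG
  have hxf : x ∉ f := fun hxf => Finset.notMem_erase x F' (hfF hxf)
  have h1 : insert x f ⊆ F' := Finset.insert_subset hxF'
    (hfF.trans (Finset.erase_subset x F'))
  have h2 : insert x f ⊆ G' := Finset.insert_subset hxG'
    (hfG.trans (Finset.erase_subset x G'))
  obtain ⟨P, hhead, hlast, hmem, hchain⟩ := h (insert x f) F' hF' G' hG' h1 h2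
  refine ⟨P.map (fun H => H.erase x), ?_, ?_, ?_, ?_⟩
  · rw [List.head?_map, hhead]; rfl
  · rw [List.getLast?_map, hlast]; rfl
  · intro H hH
    obtain ⟨H', hH', rfl⟩ := List.mem_map.1 hH
    obtain ⟨hH'C, hfH'⟩ := hmem H' hH'
    have hxH' : x ∈ H' := hfH' (Finset.mem_insert_self x f)
    refine ⟨erase_mem_link hH'C hxH', ?_⟩
    intro a ha
    exact Finset.mem_erase.2 ⟨fun e => hxf (e ▸ ha),
      hfH' (Finset.mem_insert_of_mem ha)⟩
  · refine chain'_map_of_mem hchain (fun H hH => (hmem H hH).2) ?_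
    intro A B hA hB hAB
    exact adjFacets_erase (hA (Finset.mem_insert_self x f))
      (hB (Finset.mem_insert_self x f)) hAB

end MCP
namespace MCP

variable {V : Type} [DecidableEq V] [Fintype V]

omit [Fintype V] in
lemma reachable_of_mem_facet {C : Finset (Finset V)} {F : Finset V} (hF : F ∈ C)
    {u v : V} (hu : u ∈ F) (hv : v ∈ F) : (skeleton C).Reachable u v := by
  by_cases h : u = v
  · exact h ▸ SimpleGraph.Reachable.refl u
  · exact SimpleGraph.Adj.reachable ⟨h, F, hF, hu, hv⟩

omit [Fintype V] in
lemma reachable_of_dualPath {C : Finset (Finset V)}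
    (hdim : ∀ F ∈ C, 2 ≤ F.card) :
    ∀ {P : List (Finset V)}, P.Chain' AdjFacets → (∀ F ∈ P, F ∈ C) →
    ∀ {F G : Finset V}, P.head? = some F → P.getLast? = some G →
    ∀ {u v : V}, u ∈ F → v ∈ G → (skeleton C).Reachable u v
  | [], _, _, _, _ => by intro h; simp at h
  | [F₀], _, hmem, F, G => by
    intro hh hl u v hu hv
    simp only [List.head?_cons, Option.some.injEq] at hh
    simp only [List.getLast?_singleton, Option.some.injEq] at hl
    subst hh; subst hl
    exact reachable_of_mem_facet (hmem F₀ (by simp)) hu hv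
  | F₀ :: G₀ :: P, hchain, hmem, F, G => by
    intro hh hl u v hu hv
    simp only [List.head?_cons, Option.some.injEq] at hh
    subst hh
    simp only [List.Chain', List.isChain_cons_cons] at hchain
    obtain ⟨⟨hne, hcard, hint⟩, hchain⟩ := hchain
    have hF : F₀ ∈ C := hmem F₀ (by simp)
    have hG₀ : G₀ ∈ C := hmem G₀ (by simp)
    have hintne : (F₀ ∩ G₀).Nonempty := by
      rw [← Finset.card_pos]
      have := hdim F₀ hF
      omega
    obtain ⟨z, hz⟩ := hintne
    rw [Finset.mem_inter] at hz
    have h1 : (skeleton C).Reachable u z := reachable_of_mem_facet hF hu hz.1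
    have h2 : (skeleton C).Reachable z v :=
      reachable_of_dualPath hdim hchain
        (fun H hH => hmem H (List.mem_cons_of_mem F₀ hH)) rfl
        (by rw [← hl]; rfl) hz.2 hv
    exact h1.trans h2

omit [Fintype V] in
lemma skeleton_reachable {C : Finset (Finset V)} (hn : Normal C)
    (hdim : ∀ F ∈ C, 2 ≤ F.card) {u v : V}
    (hu : u ∈ verts C) (hv : v ∈ verts C) : (skeleton C).Reachable u v := by
  obtain ⟨F, hF, huF⟩ := Finset.mem_sup.1 hu
  obtain ⟨G, hG, hvG⟩ := Finset.mem_sup.1 hv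
  obtain ⟨P, hh, hl, hmem, hchain⟩ := hn ∅ F hF G hG (Finset.empty_subset _)
    (Finset.empty_subset _)
  exact reachable_of_dualPath hdim hchain (fun H hH => (hmem H hH).1) hh hl huF hvG

omit [Fintype V] in
lemma vdist_ne_top {C : Finset (Finset V)} (hn : Normal C)
    (hdim : ∀ F ∈ C, 2 ≤ F.card) (hbig : ¬ C.sup Finset.card ≤ 1)
    {x : V} (hx : x ∈ verts C) {S : Finset V} (hS : S.Nonempty)
    (hSv : S ⊆ verts C) : vdistSets C {x} S ≠ ⊤ := by
  obtain ⟨s, hs⟩ := hS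
  have hr : (skeleton C).Reachable x s := skeleton_reachable hn hdim hx (hSv hs)
  have h1 : vdistSets C {x} S ≤ (skeleton C).edist x s := vdist_le_edist C x S hbig hs
  intro htop
  rw [htop, top_le_iff] at h1
  exact (SimpleGraph.edist_ne_top_iff_reachable.2 hr) h1

omit [Fintype V] in
/-- In a complex of dimension at least 1, if `x ∉ S` is at finite positive distance
from `S`, then the target set in the link of `x` is nonempty. -/
lemma targetSet_nonempty {C : Finset (Finset V)} (hbig : ¬ C.sup Finset.card ≤ 1)
    {x : V} {S : Finset V} (hxS : x ∉ S) (hS : S.Nonempty)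
    (hfin : vdistSets C {x} S ≠ ⊤) : (targetSet C x S).Nonempty := by
  -- the distance is attained at some s ∈ S
  have hrw : vdistSets C {x} S = S.inf (fun v => (skeleton C).edist x v) := by
    rw [vdist_singleton _ _ _ hbig, Finset.inf_eq_iInf]
  obtain ⟨s, hs, heq⟩ := Finset.exists_mem_eq_inf S hS (fun v => (skeleton C).edist x v)
  have hxd : vdistSets C {x} S = (skeleton C).edist x s := by rw [hrw, heq]
  have hxs : x ≠ s := fun e => hxS (e ▸ hs)
  have hfin' : (skeleton C).edist x s ≠ ⊤ := hxd ▸ hfin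
  obtain ⟨p, hp⟩ := SimpleGraph.exists_walk_of_edist_ne_top hfin'
  cases p with
  | nil => exact absurd rfl hxs
  | @cons _ w _ hadj q =>
    refine ⟨w, ?_⟩
    rw [targetSet, if_neg hxS, Finset.mem_filter]
    obtain ⟨hne, F, hF, hxF, hwF⟩ := hadj
    constructor
    · exact mem_verts_of_mem_facet (erase_mem_link hF hxF)
        (Finset.mem_erase.2 ⟨fun e => hne e.symm, hwF⟩)
    -- now the distance computation
    · have hq : ((q.length : ℕ∞)) + 1 = vdistSets C {x} S := by
        rw [hxd, ← hp]
        show ((q.length : ℕ∞)) + 1 = ((q.length + 1 : ℕ) : ℕ∞)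
        exact (Nat.cast_succ q.length).symm
      -- vdist {w} S ≤ q.length
      have hle : vdistSets C {w} S ≤ (q.length : ℕ∞) := by
        refine le_trans (vdist_le_edist C w S hbig hs) ?_
        exact SimpleGraph.edist_le q
      -- vdist {x} S ≤ 1 + vdist {w} S
      have hwattained : vdistSets C {w} S = S.inf (fun v => (skeleton C).edist w v) := by
        rw [vdist_singleton _ _ _ hbig, Finset.inf_eq_iInf]
      obtain ⟨t, ht, htq⟩ := Finset.exists_mem_eq_inf S hS (fun v => (skeleton C).edist w v)
      have hwd : vdistSets C {w} S = (skeleton C).edist w t := by rw [hwattained, htq]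
      have hge : vdistSets C {x} S ≤ 1 + vdistSets C {w} S := by
        refine le_trans (vdist_le_edist C x S hbig ht) ?_
        have hadj1 : (skeleton C).edist x w = 1 :=
          SimpleGraph.edist_eq_one_iff_adj.2 ⟨hne, F, hF, hxF, hwF⟩
        refine le_trans (SimpleGraph.edist_triangle (v := w)) ?_
        rw [hwd, hadj1]
      have h1 : vdistSets C {w} S + 1 ≤ vdistSets C {x} S := by
        rw [← hq]
        gcongr
      have h2 : vdistSets C {x} S ≤ vdistSets C {w} S + 1 := by
        rw [add_comm]; exact hge
      exact le_antisymm h1 h2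

end MCP
namespace MCP

variable {V : Type} [DecidableEq V] [Fintype V]

lemma stepIndex_head_ne {a b : V} (A B : List V) (h : a ≠ b) :
    stepIndex (a :: A) (b :: B) = 0 := by
  rw [stepIndex, Nat.sInf_eq_zero]
  left
  simp [h]

lemma stepIndex_cons_cons {a : V} {A B : List V} (h : A ≠ B) :
    stepIndex (a :: A) (a :: B) = stepIndex A B + 1 := by
  simp only [stepIndex]
  have hne : {k : ℕ | A[k]? ≠ B[k]?}.Nonempty := by
    by_contra hc
    push_neg at hc
    refine h (List.ext_getElem? fun i => ?_)
    by_contra hne'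
    have : i ∈ {k : ℕ | A[k]? ≠ B[k]?} := Set.mem_setOf.2 hne'
    rw [hc] at this
    exact Set.notMem_empty i this
  have hm := Nat.sInf_mem hne
  set m := sInf {k : ℕ | A[k]? ≠ B[k]?} with hmdef
  refine le_antisymm ?_ ?_
  · refine Nat.sInf_le ?_
    simpa using hm
  · refine le_csInf ?_ ?_
    · exact ⟨m + 1, by simpa using hm⟩
    · rintro (_ | j) hj
      · simp at hj
      · simp only [Set.mem_setOf_eq, List.getElem?_cons_succ] at hj
        have : m ≤ j := Nat.sInf_le hj
        omega

/-- Every list has an admissible permutation. -/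
lemma adm_exists : ∀ (n : ℕ) (L : List V), L.length ≤ n →
    ∀ (C : Finset (Finset V)) (S : Finset V), ∃ M, M.Perm L ∧ Admissible C M S
  | _, [], _, _, _ => ⟨[], List.Perm.refl [], trivial⟩
  | 0, a :: L, h, _, _ => by simp at h
  | n + 1, a :: L, h, C, S => by
    have hne : (a :: L).toFinset.Nonempty := ⟨a, by simp⟩
    obtain ⟨u, hu, hud⟩ := vdist_attained C hne S
    rw [List.mem_toFinset] at hu
    have hlen : ((a :: L).erase u).length ≤ n := by
      rw [List.length_erase_of_mem hu]
      simpa using h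
    obtain ⟨M', hM'perm, hM'adm⟩ :=
      adm_exists n ((a :: L).erase u) hlen (link C u) (targetSet C u S)
    have hperm : (u :: M').Perm (a :: L) :=
      (hM'perm.cons u).trans (List.perm_cons_erase hu).symm
    refine ⟨u :: M', hperm, ?_, hM'adm⟩
    rw [List.toFinset_eq_of_perm _ _ hperm]
    exact hud.symm

/-- Choose an admissible permutation maximizing the step index. -/
lemma exists_max_adm (C : Finset (Finset V)) (S : Finset V) (L base : List V)
    (h : ∃ N, N.Perm base ∧ Admissible C N S) :
    ∃ M, M.Perm base ∧ Admissible C M S ∧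
      ∀ N, N.Perm M → Admissible C N S → stepIndex L N ≤ stepIndex L M := by
  classical
  obtain ⟨N₀, hN₀p, hN₀a⟩ := h
  set Ms := base.permutations.filter (fun N => decide (Admissible C N S)) with hMs
  have hN₀ : N₀ ∈ Ms := by
    rw [hMs, List.mem_filter]
    exact ⟨List.mem_permutations.2 hN₀p, decide_eq_true hN₀a⟩
  have hMsne : Ms ≠ [] := fun e => by rw [e] at hN₀; exact List.not_mem_nil hN₀
  obtain ⟨M, hM⟩ : ∃ M, Ms.argmax (stepIndex L) = some M := by
    cases hA : Ms.argmax (stepIndex L) with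
    | none => exact absurd (List.argmax_eq_none.1 hA) hMsne
    | some M => exact ⟨M, rfl⟩
  have hMmem : M ∈ Ms := List.argmax_mem hM
  rw [hMs, List.mem_filter] at hMmem
  have hMperm : M.Perm base := List.mem_permutations.1 hMmem.1
  have hMadm : Admissible C M S := of_decide_eq_true hMmem.2
  refine ⟨M, hMperm, hMadm, fun N hNp hNa => ?_⟩
  have hNmem : N ∈ Ms := by
    rw [hMs, List.mem_filter]
    exact ⟨List.mem_permutations.2 (hNp.trans hMperm), decide_eq_true hNa⟩
  exact List.le_of_mem_argmax hNmem hM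

end MCP
namespace MCP

variable {V : Type} [DecidableEq V] [Fintype V]

/-- Key lemma: the inductive construction of a monotone conservative step. -/
lemma keyLemma : ∀ (L : List V) (C : Finset (Finset V)) (S : Finset V),
    L ≠ [] → L.Nodup → L.toFinset ∈ C → Pure C L.length → Normal C →
    S.Nonempty → S ⊆ verts C → (∀ x ∈ L, x ∉ S) → Admissible C L S →
    ∃ (v' : V) (M : List V),
      v' ∉ L.toFinset ∧
      M.Perm (L.dropLast ++ [v']) ∧
      M.toFinset ∈ C ∧
      Admissible C M S ∧
      List.Lex (· < ·) (distVector C M S) (distVector C L S) ∧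
      (∀ N, N.Perm M → Admissible C N S → stepIndex L N ≤ stepIndex L M)
  | [], _, _, h, _, _, _, _, _, _, _, _ => absurd rfl h
  | [x], C, S, _, _, hLC, hpure, _, hS, hSv, hd, _ => by
    -- base case: 0-dimensional complex
    have hconv : C.sup Finset.card ≤ 1 := by
      refine Finset.sup_le fun F hF => ?_
      rw [hpure F hF]
      simp
    obtain ⟨v', hv'⟩ := hS
    have hv'verts : v' ∈ verts C := hSv hv'
    obtain ⟨F, hF, hv'F⟩ := Finset.mem_sup.1 hv'verts
    have hFcard : F.card = 1 := hpure F hF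
    have hFv : F = {v'} := Finset.eq_singleton_iff_unique_mem.2
      ⟨hv'F, fun b hb => Finset.card_le_one.1 hFcard.le b hb v' hv'F⟩
    have hxS : x ∉ S := hd x (by simp)
    have hxv' : v' ≠ x := fun e => hxS (e ▸ hv')
    refine ⟨v', [v'], by simp [hxv'], by simp, ?_, ?_, ?_, ?_⟩
    · simpa using (hFv ▸ hF)
    · exact ⟨by simp, trivial⟩
    · have h0 : vdistSets C {v'} S = 0 := by
        rw [vdist_conv _ _ _ hconv, if_pos ⟨Finset.singleton_nonempty v', ⟨v', hv'⟩⟩,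
          if_pos ⟨v', Finset.mem_inter.2 ⟨Finset.mem_singleton_self v', hv'⟩⟩]
      have h1 : vdistSets C {x} S = 1 := by
        have hi : ¬ ({x} ∩ S : Finset V).Nonempty := by
          rintro ⟨w, hw⟩
          rw [Finset.mem_inter, Finset.mem_singleton] at hw
          exact hxS (hw.1 ▸ hw.2)
        rw [vdist_conv _ _ _ hconv, if_pos ⟨Finset.singleton_nonempty x, ⟨v', hv'⟩⟩,
          if_neg hi]
      show List.Lex (· < ·) [vdistSets C {v'} S] [vdistSets C {x} S]
      rw [h0, h1]
      exact List.Lex.rel zero_lt_one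
    · intro N hN _
      rw [List.perm_singleton.1 hN]
  | x :: y :: rest, C, S, _, hnd, hLC, hpure, hnormal, hS, hSv, hd, hadm => by
    set rest' := y :: rest with hrest'
    set L := x :: rest' with hL
    -- basic facts
    have hndr : rest'.Nodup := hnd.of_cons
    have hxrest : x ∉ rest'.toFinset := by
      rw [List.mem_toFinset]
      exact (List.nodup_cons.1 hnd).1
    have hLcard : L.toFinset.card = L.length := List.toFinset_card_of_nodup hnd
    have hLlen : L.length = rest.length + 2 := by rw [hL, hrest']; simp
    have hbig : ¬ C.sup Finset.card ≤ 1 := by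
      intro hle
      have h1 : L.toFinset.card ≤ C.sup Finset.card := Finset.le_sup hLC
      rw [hLcard, hLlen] at h1
      omega
    have hdim2 : ∀ F ∈ C, 2 ≤ F.card := by
      intro F hF
      rw [hpure F hF, hLlen]
      omega
    have hxS : x ∉ S := hd x List.mem_cons_self
    obtain ⟨hadm1, hadm2⟩ := hadm
    have hxverts : x ∈ verts C := mem_verts_of_mem_facet hLC (by rw [hL]; simp)
    have hfin : vdistSets C {x} S ≠ ⊤ := vdist_ne_top hnormal hdim2 hbig hxverts hS hSv
    -- the target set in the link
    have hS'ne : (targetSet C x S).Nonempty := targetSet_nonempty hbig hxS hS hfin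
    have hS'def : targetSet C x S = (verts (link C x)).filter
        (fun w => vdistSets C {w} S + 1 = vdistSets C {x} S) := by
      rw [targetSet, if_neg hxS]
    have hS'v : targetSet C x S ⊆ verts (link C x) := by
      rw [hS'def]; exact Finset.filter_subset _ _
    have hrestC' : rest'.toFinset ∈ link C x := by
      have := erase_mem_link hLC (show x ∈ L.toFinset by simp [hL])
      rwa [show L.toFinset.erase x = rest'.toFinset by
        rw [hL, List.toFinset_cons, Finset.erase_insert hxrest]] at this
    have hpure' : Pure (link C x) rest'.length := by
      have : Pure C (rest'.length + 1) := by
        rw [show rest'.length + 1 = L.length by simp [hL]]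
        exact hpure
      exact pure_link this x
    have hnormal' := normal_link hnormal x
    -- the vertices of rest' are not in the target set
    have hd' : ∀ z ∈ rest', z ∉ targetSet C x S := by
      intro z hz hz'
      rw [hS'def, Finset.mem_filter] at hz'
      obtain ⟨hzv, hzd⟩ := hz'
      have h1 : vdistSets C {x} S ≤ vdistSets C {z} S := by
        rw [hadm1]
        exact vdist_le_of_mem C (by simp [List.mem_toFinset, hz]) S
      have hzfin : vdistSets C {z} S ≠ ⊤ := by
        intro e
        refine hfin ?_
        rw [← hzd, e]
        simp
      have h2 : vdistSets C {z} S < vdistSets C {z} S + 1 :=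
        (ENat.lt_add_one_iff hzfin).2 le_rfl
      rw [hzd] at h2
      exact lt_irrefl _ (h1.trans_lt h2)
    -- apply the induction hypothesis in the link
    obtain ⟨v', M', hv'r, hM'perm, hM'C, hM'adm, hM'lex, hM'max⟩ :=
      keyLemma rest' (link C x) (targetSet C x S) (by simp [hrest']) hndr hrestC'
        hpure' hnormal' hS'ne hS'v
        hd' hadm2
    -- facts about the new facet
    have hxM' : x ∉ M'.toFinset := (insert_mem_of_mem_link hM'C).2
    have hGtopC : insert x M'.toFinset ∈ C := (insert_mem_of_mem_link hM'C).1
    have hv'M' : v' ∈ M'.toFinset := by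
      rw [List.mem_toFinset, hM'perm.mem_iff]
      simp
    have hv'x : v' ≠ x := fun e => hxM' (e ▸ hv'M')
    have hv'L : v' ∉ L.toFinset := by
      rw [hL, List.toFinset_cons, Finset.mem_insert]
      rintro (h | h)
      · exact hv'x h
      · exact hv'r h
    have hdropL : L.dropLast = x :: rest'.dropLast := by
      rw [hL]
      exact List.dropLast_cons_of_ne_nil (by rw [hrest']; simp)
    have hperm_top : (x :: M').Perm (L.dropLast ++ [v']) := by
      rw [hdropL, List.cons_append]
      exact hM'perm.cons x
    have htopFinset : (x :: M').toFinset = insert x M'.toFinset := List.toFinset_cons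
    have hM'set : M'.toFinset = rest'.dropLast.toFinset ∪ {v'} := by
      rw [List.toFinset_eq_of_perm _ _ hM'perm, List.toFinset_append]
      simp
    have hdist_ge : ∀ u ∈ M'.toFinset, vdistSets C {x} S ≤ vdistSets C {u} S ∨ u = v' := by
      intro u hu
      rw [hM'set, Finset.mem_union, Finset.mem_singleton] at hu
      rcases hu with hu | hu
      · left
        have huL : u ∈ L.toFinset := by
          rw [List.mem_toFinset] at hu ⊢
          rw [hL]
          exact List.mem_cons_of_mem x ((List.dropLast_sublist rest').mem hu)
        rw [hadm1]
        exact vdist_le_of_mem C huL S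
      · right; exact hu
    by_cases hcase : vdistSets C {v'} S < vdistSets C {x} S
    · -- fallback case: choose a max-index admissible ordering
      obtain ⟨N₀, hN₀p, hN₀a⟩ := adm_exists (x :: M').length (x :: M') le_rfl C S
      obtain ⟨M, hMp, hMadm, hMmax⟩ := exists_max_adm C S L (x :: M') ⟨N₀, hN₀p, hN₀a⟩
      have hMfin : M.toFinset = insert x M'.toFinset := by
        rw [List.toFinset_eq_of_perm _ _ hMp, htopFinset]
      refine ⟨v', M, hv'L, hMp.trans hperm_top, by rw [hMfin]; exact hGtopC, hMadm, ?_, hMmax⟩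
      -- monotonicity via the first entry
      cases M with
      | nil => exact absurd hMp.nil_eq (by simp)
      | cons m Mt =>
        obtain ⟨hMadm1, _⟩ := hMadm
        have h1 : vdistSets C {m} S < vdistSets C {x} S := by
          rw [hMadm1, hMfin]
          refine lt_of_le_of_lt ?_ hcase
          exact vdist_le_of_mem C (Finset.mem_insert_of_mem hv'M') S
        rw [hL]
        exact List.Lex.rel h1
    · -- main case: `x :: M'` is admissible with maximal step index
      push_neg at hcase
      have hGd : vdistSets C ((x :: M').toFinset) S = vdistSets C {x} S := by
        refine le_antisymm ?_ ?_
        · exact vdist_le_of_mem C (by rw [htopFinset]; exact Finset.mem_insert_self x _) S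
        · have hne : ((x :: M').toFinset).Nonempty := ⟨x, by rw [htopFinset]; simp⟩
          obtain ⟨u, hu, heq⟩ := vdist_attained C hne S
          rw [heq]
          rw [htopFinset, Finset.mem_insert] at hu
          rcases hu with rfl | hu
          · exact le_rfl
          · rcases hdist_ge u hu with h | rfl
            · exact h
            · exact hcase
      have hadmM : Admissible C (x :: M') S := ⟨hGd.symm, hM'adm⟩
      refine ⟨v', x :: M', hv'L, hperm_top, by rw [htopFinset]; exact hGtopC, hadmM, ?_, ?_⟩
      · -- monotonicity via the tail
        rw [hL]
        show List.Lex (· < ·)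
          (vdistSets C {x} S :: distVector (link C x) M' (targetSet C x S))
          (vdistSets C {x} S :: distVector (link C x) rest' (targetSet C x S))
        exact List.Lex.cons hM'lex
      · -- maximality of the step index
        intro N hNp hNa
        cases N with
        | nil => exact absurd hNp.nil_eq (by simp)
        | cons u N' =>
          by_cases hux : u = x
          · subst hux
            have hN' : N'.Perm M' := hNp.cons_inv
            obtain ⟨_, hNa2⟩ := hNa
            have hv'N' : v' ∈ N'.toFinset := by
              rw [List.mem_toFinset, hN'.mem_iff, ← List.mem_toFinset]
              exact hv'M'
            have hne1 : rest' ≠ N' := fun e => hv'r (e ▸ hv'N')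
            have hne2 : rest' ≠ M' := fun e => hv'r (e ▸ hv'M')
            rw [hL, stepIndex_cons_cons hne1, stepIndex_cons_cons hne2]
            exact Nat.add_le_add_right (hM'max N' hN' hNa2) 1
          · rw [hL, stepIndex_head_ne _ _ (fun e => hux e.symm)]
            exact Nat.zero_le _

end MCP

open MCP in
/-- existence of a monotone conservative step:
in a pure normal complex, from an admissibly ordered facet disjoint from the nonempty
target set `S`, there is an adjacent ordered facet giving a monotone conservative step. -/
theorem statement0 {V : Type} [DecidableEq V] [Fintype V] (d : ℕ)
    (C : Finset (Finset V)) (hpure : Pure C d) (hnormal : Normal C)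
    (S : Finset V) (hS : S.Nonempty) (hSv : S ⊆ verts C)
    (F₀ : List V) (hF₀ : IsOrderedFacet C F₀)
    (hdisj : F₀.toFinset ∩ S = ∅) (hadm : Admissible C F₀ S) :
    ∃ F₁ : List V, IsOrderedFacet C F₁ ∧ AdjFacets F₀.toFinset F₁.toFinset ∧
      MonotonePath C S [F₀, F₁] ∧ ConservativePath C S [F₀, F₁] := by
  classical
  obtain ⟨hnd, hLC⟩ := hF₀
  have hdF : F₀.toFinset.card = d := hpure _ hLC
  have hlen : F₀.length = d := by rw [← List.toFinset_card_of_nodup hnd, hdF]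
  have hne : F₀ ≠ [] := by
    intro e
    have hd0 : d = 0 := by rw [← hdF, e]; simp
    obtain ⟨s, hs⟩ := hS
    obtain ⟨F, hF, hsF⟩ := Finset.mem_sup.1 (hSv hs)
    have : F.card = 0 := hd0 ▸ hpure F hF
    rw [Finset.card_eq_zero] at this
    rw [this] at hsF
    exact Finset.notMem_empty s hsF
  have hdisj' : ∀ x ∈ F₀, x ∉ S := by
    intro x hx hxS
    have : x ∈ F₀.toFinset ∩ S :=
      Finset.mem_inter.2 ⟨List.mem_toFinset.2 hx, hxS⟩
    rw [hdisj] at this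
    exact Finset.notMem_empty x this
  obtain ⟨v', M, hv'L, hMperm, hMC, hMadm, hMlex, hMmax⟩ :=
    keyLemma F₀ C S hne hnd hLC (hlen ▸ hpure) hnormal hS hSv hdisj' hadm
  set g := F₀.getLast hne with hg
  have hgetlast : F₀.dropLast ++ [g] = F₀ := List.dropLast_append_getLast hne
  have hnd' : (F₀.dropLast ++ [g]).Nodup := by rw [hgetlast]; exact hnd
  have hgdrop : g ∉ F₀.dropLast := by
    rw [List.nodup_append] at hnd'
    intro hgd
    exact hnd'.2.2 g hgd g (by simp) rfl
  have hgL : g ∈ F₀.toFinset := List.mem_toFinset.2 (List.getLast_mem hne)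
  have hgv' : g ≠ v' := fun e => hv'L (e ▸ hgL)
  have hF₀fin : F₀.toFinset = F₀.dropLast.toFinset ∪ {g} := by
    conv_lhs => rw [← hgetlast]
    rw [List.toFinset_append]
    simp
  have hMfin : M.toFinset = F₀.dropLast.toFinset ∪ {v'} := by
    rw [List.toFinset_eq_of_perm _ _ hMperm, List.toFinset_append]
    simp
  have hv'M : v' ∈ M.toFinset := by rw [hMfin]; simp
  have hv'drop : v' ∉ F₀.dropLast.toFinset := by
    intro h
    refine hv'L ?_
    rw [hF₀fin]
    exact Finset.mem_union_left _ h
  have hMnd : M.Nodup := by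
    refine hMperm.nodup_iff.2 ?_
    rw [List.nodup_append]
    refine ⟨hnd.sublist (List.dropLast_sublist F₀), List.nodup_singleton v', ?_⟩
    intro a ha b hav hab
    rw [List.mem_singleton] at hav
    subst hav
    subst hab
    exact hv'drop (List.mem_toFinset.2 ha)
  have hdropcard : F₀.dropLast.toFinset.card = d - 1 := by
    rw [List.toFinset_card_of_nodup (hnd.sublist (List.dropLast_sublist F₀)),
      List.length_dropLast, hlen]
  have hd1 : 1 ≤ d := by
    rw [← hlen]
    exact List.length_pos_iff.2 hne
  have hinter : F₀.toFinset ∩ M.toFinset = F₀.dropLast.toFinset := by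
    rw [hF₀fin, hMfin]
    ext a
    simp only [Finset.mem_inter, Finset.mem_union, Finset.mem_singleton]
    constructor
    · rintro ⟨ha1 | ha1, ha2 | ha2⟩
      · exact ha1
      · exact ha1
      · exact ha2
      · exact absurd (ha1.symm.trans ha2) hgv'
    · intro ha
      exact ⟨Or.inl ha, Or.inl ha⟩
  have hsdiff : F₀.toFinset \ M.toFinset = {g} := by
    rw [hF₀fin, hMfin]
    ext a
    simp only [Finset.mem_sdiff, Finset.mem_union, Finset.mem_singleton]
    constructor
    · rintro ⟨ha1 | ha1, ha2⟩
      · exact absurd (Or.inl ha1) ha2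
      · exact ha1
    · rintro rfl
      push_neg
      exact ⟨Or.inr rfl, fun h => absurd h (hgdrop ∘ List.mem_toFinset.1), hgv'⟩
  refine ⟨M, ⟨hMnd, hMC⟩, ⟨?_, ?_, ?_⟩, ?_, ?_, ?_⟩
  · intro e
    exact hv'L (e ▸ hv'M)
  · rw [hdF, hpure _ hMC]
  · rw [hinter, hdropcard, hdF]
    omega
  · exact List.isChain_pair.2 hMlex
  · intro L' hL'
    have : L' = F₀ := by
      simp only [List.head?_cons, Option.mem_def, Option.some.injEq] at hL'
      exact hL'.symm
    rw [this]
    exact hadm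
  · refine List.isChain_pair.2 ⟨⟨g, ?_, hsdiff⟩, hMadm, hMmax⟩
    exact List.getLast?_eq_getLast_of_ne_nil hne
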